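/- arXiv:2010.08408 — 7 statements merged into one kernel-verified Lean document; each statement's English description precedes it below -/
import Mathlib

section
/- Let n ≥ 1 and let g be a 2n×2n complex matrix satisfying J·ḡ = g·J and gᵀ·g = 1_{2n}. Then det g = 1. -/
open Matrix Polynomial

/-- A monic real polynomial all of whose real roots have even multiplicity is
everywhere nonnegative. -/
theorem aux_eval_nonneg : ∀ (N : ℕ) (P : Polynomial ℝ), P.natDegree ≤ N → P.Monic →
    (∀ r : ℝ, Even (rootMultiplicity r P)) → ∀ x : ℝ, 0 ≤ P.eval x := by
  intro N
  induction N with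
  | zero =>
    intro P hd hm _ x
    have h0 : P = Polynomial.C (P.coeff 0) := Polynomial.eq_C_of_natDegree_le_zero hd
    have : P.coeff 0 = 1 := by
      have hnd : P.natDegree = 0 := Nat.le_zero.mp hd
      have := hm.leadingCoeff
      rwa [Polynomial.leadingCoeff, hnd] at this
    rw [h0, this]
    simp
  | succ N ih =>
    intro P hd hm hev x
    have hPne : P ≠ 0 := hm.ne_zero
    by_cases hroot : ∃ r : ℝ, P.IsRoot r
    · obtain ⟨r, hr⟩ := hroot
      set m := rootMultiplicity r P with hmdef
      have hmev : Even m := hev r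
      have hmpos : 0 < m := (Polynomial.rootMultiplicity_pos hPne).mpr hr
      set Q := P /ₘ (X - Polynomial.C r) ^ m with hQdef
      have hfac : (X - Polynomial.C r) ^ m * Q = P :=
        Polynomial.pow_mul_divByMonic_rootMultiplicity_eq P r
      have hXm : ((X - Polynomial.C r) ^ m).Monic := (Polynomial.monic_X_sub_C r).pow m
      have hQm : Q.Monic := hXm.of_mul_monic_left (by rw [hfac]; exact hm)
      have hQne : Q ≠ 0 := hQm.ne_zero
      have hmulne : (X - Polynomial.C r) ^ m * Q ≠ 0 := by rw [hfac]; exact hPne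
      have hdeg : P.natDegree = m + Q.natDegree := by
        conv_lhs => rw [← hfac]
        rw [Polynomial.natDegree_mul hXm.ne_zero hQne, Polynomial.natDegree_pow,
          Polynomial.natDegree_X_sub_C, mul_one]
      have hQdeg : Q.natDegree ≤ N := by omega
      have hevQ : ∀ s : ℝ, Even (rootMultiplicity s Q) := by
        intro s
        have hsplit : rootMultiplicity s P
            = rootMultiplicity s ((X - Polynomial.C r) ^ m) + rootMultiplicity s Q := by
          conv_lhs => rw [← hfac]
          exact Polynomial.rootMultiplicity_mul hmulne
        by_cases hsr : s = r
        · subst hsr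
          rw [Polynomial.rootMultiplicity_X_sub_C_pow] at hsplit
          have := hev s
          rw [hsplit] at this
          exact (Nat.even_add.mp this).mp hmev
        · have hnr : ¬ ((X - Polynomial.C r) ^ m).IsRoot s := by
            simp only [Polynomial.IsRoot, Polynomial.eval_pow, Polynomial.eval_sub,
              Polynomial.eval_X, Polynomial.eval_C]
            exact pow_ne_zero _ (sub_ne_zero.mpr hsr)
          rw [Polynomial.rootMultiplicity_eq_zero hnr, zero_add] at hsplit
          rw [← hsplit]; exact hev s
      have hQx := ih Q hQdeg hQm hevQ x
      have : P.eval x = (x - r) ^ m * Q.eval x := by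
        conv_lhs => rw [← hfac]
        simp
      rw [this]
      exact mul_nonneg (hmev.pow_nonneg _) hQx
    · by_contra hneg
      push_neg at hneg
      have hdegpos : 0 < P.degree := by
        rcases Nat.eq_zero_or_pos P.natDegree with h0 | hpos
        · exfalso
          have h0' : P = Polynomial.C (P.coeff 0) := P.eq_C_of_natDegree_le_zero h0.le
          have hc : P.coeff 0 = 1 := by
            have := hm.leadingCoeff
            rwa [Polynomial.leadingCoeff, h0] at this
          rw [h0', hc] at hneg
          norm_num at hneg
        · exact Polynomial.natDegree_pos_iff_degree_pos.mp hpos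
      have htend := P.tendsto_atTop_of_leadingCoeff_nonneg hdegpos (by rw [hm.leadingCoeff]; norm_num)
      have hb : ∃ b : ℝ, x ≤ b ∧ 0 ≤ P.eval b := by
        have h1 : ∀ᶠ b in Filter.atTop, 0 ≤ P.eval b := htend.eventually_ge_atTop 0
        have h2 : ∀ᶠ b in Filter.atTop, x ≤ b := Filter.eventually_ge_atTop x
        obtain ⟨b, hb1, hb2⟩ := (h2.and h1).exists
        exact ⟨b, hb1, hb2⟩
      obtain ⟨b, hxb, hbpos⟩ := hb
      have hiv := intermediate_value_Icc hxb (P.continuous_aeval).continuousOn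
      have h0mem : (0:ℝ) ∈ Set.Icc (P.eval x) (P.eval b) := ⟨le_of_lt hneg, hbpos⟩
      obtain ⟨c, _, hc⟩ := hiv h0mem
      exact hroot ⟨c, hc⟩
open Matrix Polynomial

/-- conjugating a matrix-vector product. -/
theorem aux_star_mulVec {ι : Type*} [Fintype ι] (M : Matrix ι ι ℂ) (v : ι → ℂ) :
    star (M *ᵥ v) = (M.map (starRingEnd ℂ)) *ᵥ (star v) := by
  funext i
  simp only [Pi.star_apply, Matrix.mulVec, dotProduct, Matrix.map_apply]
  rw [show (star (∑ j, M i j * v j) : ℂ) = (starRingEnd ℂ) (∑ j, M i j * v j) from rfl,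
    map_sum]
  simp [mul_comm]

/-- A complex subspace invariant under an antilinear map squaring to `-1`
has even dimension. -/
theorem aux_even {ι : Type*} [Fintype ι] [DecidableEq ι] (A : Matrix ι ι ℂ)
    (hA : A * A.map (starRingEnd ℂ) = -1)
    (W : Submodule ℂ (ι → ℂ)) (hW : ∀ x ∈ W, A *ᵥ (star x) ∈ W) :
    Even (Module.finrank ℂ W) := by
  classical
  set d := Module.finrank ℂ W with hd
  let b : Module.Basis (Fin d) ℂ W := Module.finBasis ℂ W
  let σ : W → W := fun w => ⟨A *ᵥ star (w : ι → ℂ), hW _ w.2⟩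
  have hσval : ∀ w : W, (σ w : ι → ℂ) = A *ᵥ star (w : ι → ℂ) := fun w => rfl
  have hσ2 : ∀ w : W, σ (σ w) = -w := by
    intro w
    apply Subtype.ext
    rw [hσval, hσval, aux_star_mulVec, star_star, Matrix.mulVec_mulVec, hA]
    simp [Matrix.neg_mulVec]
  -- expansion of σ in the basis
  have hkey : ∀ w : W, ∀ i, b.repr (σ w) i
      = ∑ j, (starRingEnd ℂ) (b.repr w j) * b.repr (σ (b j)) i := by
    intro w i
    have hsum : σ w = ∑ j, (starRingEnd ℂ) (b.repr w j) • σ (b j) := by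
      apply Subtype.ext
      rw [hσval]
      have hw : (w : ι → ℂ) = ∑ j, b.repr w j • ((b j : W) : ι → ℂ) := by
        conv_lhs => rw [← b.sum_repr w]
        rw [Submodule.coe_sum]
        simp
      rw [hw, star_sum]
      simp_rw [star_smul]
      calc A *ᵥ (∑ j, star (b.repr w j) • star ((b j : W) : ι → ℂ))
          = A.mulVecLin (∑ j, star (b.repr w j) • star ((b j : W) : ι → ℂ)) := rfl
        _ = ∑ j, star (b.repr w j) • A.mulVecLin (star ((b j : W) : ι → ℂ)) := by
            rw [map_sum]
            simp_rw [_root_.map_smul]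
        _ = ((∑ j, (starRingEnd ℂ) (b.repr w j) • σ (b j) : W) : ι → ℂ) := by
            rw [Submodule.coe_sum]
            apply Finset.sum_congr rfl
            intro j _
            rw [Submodule.coe_smul, hσval]
            rfl
    rw [hsum, map_sum]
    rw [Finsupp.finset_sum_apply]
    simp_rw [_root_.map_smul, Finsupp.smul_apply, smul_eq_mul]
  let C : Matrix (Fin d) (Fin d) ℂ := Matrix.of fun i j => b.repr (σ (b j)) i
  have hCC : C * C.map (starRingEnd ℂ) = -1 := by
    ext i k
    have h1 := hkey (σ (b k)) i
    rw [hσ2 (b k)] at h1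
    rw [map_neg, Module.Basis.repr_self] at h1
    have hL : (-(Finsupp.single k (1:ℂ))) i = -(if k = i then (1:ℂ) else 0) := by
      rw [Finsupp.neg_apply, Finsupp.single_apply]
    rw [hL] at h1
    have hR : ∀ j, b.repr (σ (b k)) j = C j k := fun j => rfl
    calc (C * C.map (starRingEnd ℂ)) i k
        = ∑ j, C i j * (starRingEnd ℂ) (C j k) := by
          simp [Matrix.mul_apply, Matrix.map_apply]
      _ = ∑ j, (starRingEnd ℂ) (b.repr (σ (b k)) j) * b.repr (σ (b j)) i := by
          apply Finset.sum_congr rfl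
          intro j _
          rw [hR j, mul_comm]
          rfl
      _ = -(if k = i then (1:ℂ) else 0) := by rw [← h1]
      _ = (-1 : Matrix (Fin d) (Fin d) ℂ) i k := by
          simp [Matrix.neg_apply, Matrix.one_apply, eq_comm]
  -- take determinants
  have hdet : C.det * (starRingEnd ℂ) C.det = (-1 : ℂ) ^ d := by
    have := congrArg Matrix.det hCC
    rw [Matrix.det_mul,
      show C.map ⇑(starRingEnd ℂ) = (starRingEnd ℂ).mapMatrix C from rfl,
      ← RingHom.map_det] at this
    rw [this]
    rw [show (-1 : Matrix (Fin d) (Fin d) ℂ) = -(1 : Matrix (Fin d) (Fin d) ℂ) from rfl,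
      Matrix.det_neg, Matrix.det_one, Fintype.card_fin, mul_one]
  rcases Nat.even_or_odd d with he | ho
  · exact he
  · exfalso
    rw [ho.neg_one_pow] at hdet
    rw [Complex.mul_conj] at hdet
    have him := congrArg Complex.re hdet
    simp only [Complex.ofReal_re, Complex.neg_re, Complex.one_re] at him
    have := Complex.normSq_nonneg C.det
    linarith
open Matrix Polynomial

/-- Characteristic polynomial is invariant under conjugation. -/
theorem aux_charpoly_conj {ι : Type*} [Fintype ι] [DecidableEq ι]
    (P Pi M : Matrix ι ι ℂ) (h1 : P * Pi = 1) (h2 : Pi * P = 1) :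
    (Pi * M * P).charpoly = M.charpoly := by
  have key : charmatrix (Pi * M * P)
      = (Polynomial.C : ℂ →+* ℂ[X]).mapMatrix Pi * charmatrix M
        * (Polynomial.C : ℂ →+* ℂ[X]).mapMatrix P := by
    rw [charmatrix, charmatrix, mul_sub, sub_mul]
    congr 1
    · have hc : Commute (Matrix.scalar ι (X : ℂ[X]))
          ((Polynomial.C : ℂ →+* ℂ[X]).mapMatrix Pi) :=
        (Matrix.scalar_commute _ (fun r => Commute.all _ _) _)
      rw [← hc.eq, mul_assoc, ← _root_.map_mul, h2, _root_.map_one, mul_one]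
    · rw [← _root_.map_mul, ← _root_.map_mul]
  rw [Matrix.charpoly, Matrix.charpoly, key, Matrix.det_mul, Matrix.det_mul]
  rw [mul_comm ((Polynomial.C : ℂ →+* ℂ[X]).mapMatrix Pi).det _, mul_assoc,
    ← Matrix.det_mul,
    ← _root_.map_mul ((Polynomial.C : ℂ →+* ℂ[X]).mapMatrix), h2, _root_.map_one,
    Matrix.det_one, mul_one]

/-- The characteristic polynomial of `M - r • 1`. -/
theorem aux_charpoly_shift {ι : Type*} [Fintype ι] [DecidableEq ι]
    (M : Matrix ι ι ℂ) (r : ℂ) :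
    M.charpoly.comp (X + Polynomial.C r) = (M - r • 1).charpoly := by
  let θ : ℂ[X] →+* ℂ[X] := Polynomial.eval₂RingHom Polynomial.C (X + Polynomial.C r)
  have hX : θ X = X + Polynomial.C r := Polynomial.eval₂_X _ _
  have hC : ∀ a : ℂ, θ (Polynomial.C a) = Polynomial.C a := fun a => Polynomial.eval₂_C _ _
  have hcomp : M.charpoly.comp (X + Polynomial.C r) = θ M.charpoly := rfl
  have hmap : (charmatrix M).map θ = charmatrix (M - r • 1) := by
    ext i j
    rw [Matrix.map_apply]
    by_cases h : i = j
    · subst h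
      rw [charmatrix_apply_eq, charmatrix_apply_eq, map_sub, hX, hC]
      have he : (M - r • 1) i i = M i i - r := by
        simp [Matrix.sub_apply, Matrix.smul_apply, Matrix.one_apply_eq]
      rw [he, map_sub]
      ring
    · rw [charmatrix_apply_ne _ _ _ h, charmatrix_apply_ne _ _ _ h, map_neg, hC]
      have he : (M - r • 1) i j = M i j := by
        simp [Matrix.sub_apply, Matrix.smul_apply, Matrix.one_apply_ne h]
      rw [he]
  rw [hcomp, Matrix.charpoly, RingHom.map_det, Matrix.charpoly]
  congr 1
open Matrix Polynomial

/-- The 2n×2n block matrix `J = [[0, −1ₙ], [1ₙ, 0]]` over `ℂ`. -/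
noncomputable def Jmat (n : ℕ) : Matrix (Fin n ⊕ Fin n) (Fin n ⊕ Fin n) ℂ :=
  Matrix.fromBlocks 0 (-1) 1 0

/-- Every real point of the quaternionic orthogonal group `O^J_{2n}` has determinant 1:
if `J·ḡ = g·J` and `gᵀ·g = 1` then `det g = 1`. -/
theorem stmt1 (n : ℕ) (hn : 1 ≤ n)
    (g : Matrix (Fin n ⊕ Fin n) (Fin n ⊕ Fin n) ℂ)
    (h1 : Jmat n * g.map (starRingEnd ℂ) = g * Jmat n)
    (h2 : gᵀ * g = 1) :
    g.det = 1 := by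
  classical
  have hJmat : Jmat n = Matrix.J (Fin n) ℂ := rfl
  set Jm := Jmat n with hJm
  have hJJ : Jm * Jm = -1 := Matrix.J_squared (Fin n) ℂ
  have hJreal : Jm.map (starRingEnd ℂ) = Jm := by
    ext i j
    rcases i with i | i <;> rcases j with j | j <;>
      simp [hJm, Jmat, Matrix.fromBlocks, Matrix.map_apply, Matrix.one_apply,
        apply_ite (starRingEnd ℂ)]
  have hJnJ : (-Jm) * Jm = 1 := by rw [neg_mul, hJJ, neg_neg]
  have hJJn : Jm * (-Jm) = 1 := by rw [mul_neg, hJJ, neg_neg]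
  -- the conjugate of g is similar to g
  have hgbar : g.map (starRingEnd ℂ) = (-Jm) * g * Jm := by
    have := congrArg (fun A => (-Jm) * A) h1
    rw [← mul_assoc, hJnJ, one_mul] at this
    rw [this, mul_assoc]
  -- hence the characteristic polynomial has real coefficients
  have hmapconj : g.charpoly.map (starRingEnd ℂ) = g.charpoly := by
    rw [← Matrix.charpoly_map, hgbar]
    exact aux_charpoly_conj Jm (-Jm) g hJJn hJnJ
  have hcoeffim : ∀ k, (g.charpoly.coeff k).im = 0 := by
    intro k
    have := congrArg (fun q => Polynomial.coeff q k) hmapconj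
    simp only [Polynomial.coeff_map] at this
    exact (Complex.conj_eq_iff_im.mp this)
  -- the real characteristic polynomial
  set P : Polynomial ℝ := g.charpoly.sum
    (fun k c => Polynomial.C c.re * Polynomial.X ^ k) with hPdef
  have hPcoeff : ∀ k, P.coeff k = (g.charpoly.coeff k).re := by
    intro k
    rw [hPdef, Polynomial.sum_def]
    simp_rw [Polynomial.C_mul_X_pow_eq_monomial]
    rw [Polynomial.finset_sum_coeff]
    simp_rw [Polynomial.coeff_monomial]
    rw [Finset.sum_ite_eq' g.charpoly.support k (fun j => (g.charpoly.coeff j).re)]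
    by_cases hk : k ∈ g.charpoly.support
    · rw [if_pos hk]
    · rw [if_neg hk]
      rw [Polynomial.notMem_support_iff.mp hk]
      simp
  have hPmap : P.map (algebraMap ℝ ℂ) = g.charpoly := by
    apply Polynomial.ext
    intro k
    rw [Polynomial.coeff_map, hPcoeff]
    apply Complex.ext
    · simp
    · simp [hcoeffim k]
  have hPmonic : P.Monic :=
    Polynomial.monic_of_injective (algebraMap ℝ ℂ).injective
      (by rw [hPmap]; exact g.charpoly_monic)
  -- evenness of all real root multiplicities
  have heven : ∀ r : ℝ, Even (rootMultiplicity r P) := by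
    intro r
    rw [Polynomial.eq_rootMultiplicity_map (algebraMap ℝ ℂ).injective r, hPmap]
    rw [Polynomial.rootMultiplicity_eq_natTrailingDegree]
    rw [show (algebraMap ℝ ℂ) r = ((r : ℂ)) from congrFun Complex.coe_algebraMap r]
    rw [aux_charpoly_shift g ((r : ℂ))]
    set N := g - (r : ℂ) • 1 with hN
    -- N is quaternionic
    have hqN : Jm * N.map (starRingEnd ℂ) = N * Jm := by
      have hmap : N.map (starRingEnd ℂ) = g.map (starRingEnd ℂ) - (r : ℂ) • 1 := by
        ext i j
        simp only [hN, Matrix.map_apply, Matrix.sub_apply, Matrix.smul_apply,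
          Matrix.one_apply, smul_eq_mul, map_sub, _root_.map_mul, Complex.conj_ofReal,
          apply_ite (starRingEnd ℂ), _root_.map_one, _root_.map_zero]
      rw [hmap, mul_sub, sub_mul, h1, Matrix.mul_smul, Matrix.smul_mul, mul_one, one_mul]
    have hqNk : ∀ k : ℕ, Jm * (N ^ k).map (starRingEnd ℂ) = N ^ k * Jm := by
      intro k
      induction k with
      | zero =>
        rw [pow_zero, _root_.Matrix.map_one _ (_root_.map_zero _) (_root_.map_one _), mul_one, one_mul]
      | succ k ih =>
        rw [pow_succ, _root_.Matrix.map_mul, ← mul_assoc, ih, mul_assoc, hqN, ← mul_assoc,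
          ← pow_succ]
    -- pass to the endomorphism
    set φ : Module.End ℂ ((Fin n ⊕ Fin n) → ℂ) := Matrix.toLin' N with hφ
    have hφchar : N.charpoly = LinearMap.charpoly φ := by
      rw [← LinearMap.charpoly_toMatrix φ (Pi.basisFun ℂ (Fin n ⊕ Fin n)),
        LinearMap.toMatrix_eq_toMatrix', hφ, LinearMap.toMatrix'_toLin']
    rw [hφchar, ← LinearMap.finrank_maxGenEigenspace_zero_eq φ]
    -- the maximal generalized eigenspace is σ-invariant
    apply aux_even Jm (by rw [hJreal, hJJ])
    intro x hx
    rw [Module.End.mem_maxGenEigenspace] at hx ⊢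
    obtain ⟨k, hk⟩ := hx
    refine ⟨k, ?_⟩
    simp only [zero_smul, sub_zero] at hk ⊢
    have hpow : ∀ (m : ℕ) (v : (Fin n ⊕ Fin n) → ℂ), (φ ^ m) v = (N ^ m) *ᵥ v := by
      intro m
      induction m with
      | zero => intro v; simp
      | succ m ih =>
        intro v
        rw [pow_succ, Module.End.mul_apply, ih, pow_succ, hφ, Matrix.toLin'_apply,
          Matrix.mulVec_mulVec]
    rw [hpow] at hk
    rw [hpow]
    rw [Matrix.mulVec_mulVec, ← hqNk k, ← Matrix.mulVec_mulVec, ← aux_star_mulVec, hk]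
    simp
  -- determinant of g is the real number `P.eval 0`
  have hcard : Fintype.card (Fin n ⊕ Fin n) = n + n := by
    simp [Fintype.card_sum]
  have hdetP : g.det = ((P.eval 0 : ℝ) : ℂ) := by
    rw [Matrix.det_eq_sign_charpoly_coeff, hcard, Even.neg_one_pow ⟨n, rfl⟩, one_mul]
    rw [← hPmap, Polynomial.coeff_map, ← Polynomial.coeff_zero_eq_eval_zero]
    rfl
  have hge : (0:ℝ) ≤ P.eval 0 := aux_eval_nonneg P.natDegree P le_rfl hPmonic heven 0
  have hdet2 : g.det * g.det = 1 := by
    have := congrArg Matrix.det h2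
    rwa [Matrix.det_mul, Matrix.det_transpose, Matrix.det_one] at this
  rw [hdetP] at hdet2 ⊢
  have hsq : P.eval 0 * P.eval 0 = 1 := by
    have : (((P.eval 0 * P.eval 0 : ℝ)) : ℂ) = ((1:ℝ) : ℂ) := by
      push_cast
      rw [hdet2]
    exact_mod_cast this
  have h1' : P.eval 0 = 1 := by nlinarith
  rw [h1', Complex.ofReal_one]
end

section
/- Let F be a field of characteristic zero, M an F-vector space, and Q a quadratic form on M. Let x be an invertible element of the Clifford algebra C(Q), let r ∈ F satisfy x·β(x) = r·1 (a scalar), and let v, w ∈ M satisfy x·ι(v)·β(x) = ι(w). Then Q(w) = r²·Q(v). -/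
/-- If `x` is an invertible element of the Clifford algebra with `x·β(x) = r` a scalar, and
`x·ι(v)·β(x) = ι(w)`, then `Q(w) = r²·Q(v)` (the similitude factor of twisted conjugation is the
square of the spinor norm). -/
theorem stmt7 (F M : Type*) [Field F] [CharZero F] [AddCommGroup M] [Module F M]
    (Q : QuadraticForm F M) (x : CliffordAlgebra Q) (hx : IsUnit x) (r : F)
    (v w : M)
    (hr : x * CliffordAlgebra.reverse x = algebraMap F (CliffordAlgebra Q) r)
    (hvw : x * CliffordAlgebra.ι Q v * CliffordAlgebra.reverse x = CliffordAlgebra.ι Q w) :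
    Q w = r ^ 2 * Q v := by
  haveI : Invertible (2 : F) := invertibleOfNonzero two_ne_zero
  obtain ⟨u, rfl⟩ := hx
  have hrx : CliffordAlgebra.reverse (u : CliffordAlgebra Q) * u
      = algebraMap F (CliffordAlgebra Q) r := by
    have h1 : (CliffordAlgebra.reverse (u : CliffordAlgebra Q)) =
        (↑u⁻¹ : CliffordAlgebra Q) * algebraMap F (CliffordAlgebra Q) r := by
      rw [← hr, ← mul_assoc, Units.inv_mul, one_mul]
    rw [h1, mul_assoc, Algebra.commutes r (u:CliffordAlgebra Q), ← mul_assoc, Units.inv_mul, one_mul]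
  have key : algebraMap F (CliffordAlgebra Q) (Q w) =
      algebraMap F (CliffordAlgebra Q) (r ^ 2 * Q v) := by
    rw [← CliffordAlgebra.ι_sq_scalar Q w, ← hvw]
    calc (↑u * CliffordAlgebra.ι Q v * CliffordAlgebra.reverse ↑u) *
          (↑u * CliffordAlgebra.ι Q v * CliffordAlgebra.reverse ↑u)
        = ↑u * CliffordAlgebra.ι Q v *
            (CliffordAlgebra.reverse (↑u : CliffordAlgebra Q) * ↑u) *
            CliffordAlgebra.ι Q v * CliffordAlgebra.reverse ↑u := by
          simp [mul_assoc]
      _ = ↑u * CliffordAlgebra.ι Q v * algebraMap F (CliffordAlgebra Q) r *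
            CliffordAlgebra.ι Q v * CliffordAlgebra.reverse ↑u := by rw [hrx]
      _ = algebraMap F (CliffordAlgebra Q) r *
            (↑u * (CliffordAlgebra.ι Q v * CliffordAlgebra.ι Q v) *
              CliffordAlgebra.reverse ↑u) := by
          rw [← Algebra.commutes]; simp [mul_assoc]
      _ = algebraMap F (CliffordAlgebra Q) r *
            (↑u * algebraMap F (CliffordAlgebra Q) (Q v) *
              CliffordAlgebra.reverse ↑u) := by rw [CliffordAlgebra.ι_sq_scalar]
      _ = algebraMap F (CliffordAlgebra Q) r * algebraMap F (CliffordAlgebra Q) (Q v) *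
            (↑u * CliffordAlgebra.reverse ↑u) := by
          rw [← Algebra.commutes (Q v)]; simp [mul_assoc]
      _ = algebraMap F (CliffordAlgebra Q) (r ^ 2 * Q v) := by
          rw [hr, ← map_mul, ← map_mul]; ring_nf
  exact (algebraMap F (CliffordAlgebra Q)).injective key
end

section
/- Let R be a commutative ring, M an R-module, Q a quadratic form on M, and V₁, V₂ ⊆ M submodules such that polar Q(v₁, v₂) = 0 for all v₁ ∈ V₁ and v₂ ∈ V₂. Let i, j ∈ ℤ/2, let a be an element of the Clifford algebra C(Q) lying both in the i-th graded piece of the ℤ/2-grading and in the R-subalgebra generated by ι(V₁), and let b lie both in the j-th graded piece and in the R-subalgebra generated by ι(V₂). Then a·b = −b·a if i = j = 1, and a·b = b·a otherwise (i.e. a·b = (−1)^{ij}·b·a). -/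
open CliffordAlgebra

/-- Super-commutation in a Clifford algebra for an orthogonal pair of submodules: if `a` lies in
the `i`-th graded piece and in the subalgebra generated by `ι(V₁)`, and `b` lies in the `j`-th
graded piece and in the subalgebra generated by `ι(V₂)`, with `V₁ ⟂ V₂`, then
`a·b = (−1)^{ij}·b·a`. -/
theorem stmt9 (R M : Type*) [CommRing R] [AddCommGroup M] [Module R M]
    (Q : QuadraticForm R M) (V₁ V₂ : Submodule R M)
    (horth : ∀ v₁ ∈ V₁, ∀ v₂ ∈ V₂, QuadraticMap.polar (⇑Q) v₁ v₂ = 0)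
    (i j : ZMod 2) (a b : CliffordAlgebra Q)
    (hai : a ∈ CliffordAlgebra.evenOdd Q i)
    (haV : a ∈ Algebra.adjoin R (⇑(CliffordAlgebra.ι Q) '' (V₁ : Set M)))
    (hbj : b ∈ CliffordAlgebra.evenOdd Q j)
    (hbV : b ∈ Algebra.adjoin R (⇑(CliffordAlgebra.ι Q) '' (V₂ : Set M))) :
    if i = 1 ∧ j = 1 then a * b = -(b * a) else a * b = b * a := by
  -- step 1: ι v₁ anticommutes up to involute with anything in adjoin (ι '' V₂)
  have key1 : ∀ v₁ ∈ V₁, ∀ x ∈ Algebra.adjoin R (⇑(ι Q) '' (V₂ : Set M)),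
      ι Q v₁ * x = involute x * ι Q v₁ := by
    intro v₁ hv₁ x hx
    induction hx using Algebra.adjoin_induction with
    | mem y hy =>
      obtain ⟨w, hw, rfl⟩ := hy
      have h := ι_mul_ι_add_swap (Q := Q) v₁ w
      rw [horth v₁ hv₁ w hw, map_zero] at h
      rw [involute_ι, neg_mul, eq_comm, neg_eq_iff_add_eq_zero, add_comm]
      exact h
    | algebraMap r => simp [Algebra.commutes]
    | add x y hx hy ihx ihy => simp [mul_add, add_mul, ihx, ihy]
    | mul x y hx hy ihx ihy =>
      rw [← mul_assoc, ihx, mul_assoc, ihy, ← mul_assoc, map_mul]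
  -- step 2: since b is homogeneous of degree j, `involute b = ±b`, giving commutation rules
  have key2 : ∀ x ∈ Algebra.adjoin R (⇑(ι Q) '' (V₁ : Set M)),
      x * b = b * (if j = 1 then involute x else x) := by
    intro x hx
    induction hx using Algebra.adjoin_induction with
    | mem y hy =>
      obtain ⟨v, hv, rfl⟩ := hy
      have h := key1 v hv b hbV
      rcases eq_or_ne j 1 with hj | hj
      · rw [if_pos hj]
        rw [hj] at hbj
        rw [involute_eq_of_mem_odd hbj, neg_mul] at h
        rw [h, involute_ι, mul_neg]
      · have hj0 : j = 0 := (by decide : ∀ k : ZMod 2, k ≠ 1 → k = 0) j hj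
        rw [if_neg hj]
        rw [hj0] at hbj
        rw [involute_eq_of_mem_even hbj] at h
        exact h
    | algebraMap r =>
      split <;> simp [Algebra.commutes]
    | add x y hx hy ihx ihy =>
      split <;> simp_all [add_mul, mul_add]
    | mul x y hx hy ihx ihy =>
      rcases eq_or_ne j 1 with hj | hj
      · rw [if_pos hj] at *
        rw [mul_assoc, ihy, ← mul_assoc, ihx, mul_assoc, map_mul]
      · rw [if_neg hj] at *
        rw [mul_assoc, ihy, ← mul_assoc, ihx, mul_assoc]
  have h := key2 a haV
  rcases eq_or_ne j 1 with hj | hj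
  · rw [if_pos hj] at h
    rcases eq_or_ne i 1 with hi | hi
    · rw [if_pos ⟨hi, hj⟩]
      rw [hi] at hai
      rw [involute_eq_of_mem_odd hai, mul_neg] at h
      exact h
    · rw [if_neg (by tauto)]
      have hi0 : i = 0 := (by decide : ∀ k : ZMod 2, k ≠ 1 → k = 0) i hi
      rw [hi0] at hai
      rw [involute_eq_of_mem_even hai] at h
      exact h
  · rw [if_neg hj] at h
    rw [if_neg (by tauto)]
    exact h
end

section
/- Let R be a commutative ring, M an R-module, Q a quadratic form on M, and V₁, V₂ ⊆ M submodules such that polar Q(v₁, v₂) = 0 for all v₁ ∈ V₁ and v₂ ∈ V₂. Let i, j ∈ ℤ/2, let a be an element of the Clifford algebra C(Q) lying both in the i-th graded piece and in the R-subalgebra generated by ι(V₁), and let b lie both in the j-th graded piece and in the R-subalgebra generated by ι(V₂). Then β(a·b) = −β(a)·β(b) if i = j = 1, and β(a·b) = β(a)·β(b) otherwise, where β = reverse. -/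
open CliffordAlgebra in
private lemma aux_map_mem_evenOdd {R M₁ M₂ : Type*} [CommRing R] [AddCommGroup M₁]
    [AddCommGroup M₂] [Module R M₁] [Module R M₂] {Q₁ : QuadraticForm R M₁}
    {Q₂ : QuadraticForm R M₂} (f : Q₁ →qᵢ Q₂) {k : ZMod 2} {x : CliffordAlgebra Q₁}
    (hx : x ∈ evenOdd Q₁ k) : CliffordAlgebra.map f x ∈ evenOdd Q₂ k := by
  induction hx using Submodule.iSup_induction' with
  | zero => rw [map_zero]; exact zero_mem _
  | add x _ y _ ihx ihy => rw [map_add]; exact add_mem ihx ihy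
  | mem n m hm =>
    obtain ⟨n, rfl⟩ := n
    dsimp only at hm ⊢
    refine SetLike.le_def.mp
      (le_iSup (fun m : {m : ℕ // (↑m : ZMod 2) = ↑n} => LinearMap.range (ι Q₂) ^ (m : ℕ))
        ⟨n, rfl⟩) ?_
    induction hm using Submodule.pow_induction_on_left' with
    | algebraMap r =>
      rw [AlgHom.commutes, pow_zero]
      exact Submodule.algebraMap_mem r
    | add x y n hx hy ihx ihy => rw [map_add]; exact add_mem ihx ihy
    | mem_mul m hm n x hx ih =>
      obtain ⟨v, rfl⟩ := hm
      rw [map_mul, CliffordAlgebra.map_apply_ι, pow_succ']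
      exact Submodule.mul_mem_mul (LinearMap.mem_range_self _ _) ih

open CliffordAlgebra in
private lemma aux_exists_preimage {R M₁ M₂ : Type*} [CommRing R] [AddCommGroup M₁]
    [AddCommGroup M₂] [Module R M₁] [Module R M₂] {Q₁ : QuadraticForm R M₁}
    {Q₂ : QuadraticForm R M₂} (f : Q₁ →qᵢ Q₂) {k : ZMod 2} {a : CliffordAlgebra Q₂}
    (ha : a ∈ evenOdd Q₂ k) (haV : a ∈ (CliffordAlgebra.map f).range) :
    ∃ x ∈ evenOdd Q₁ k, CliffordAlgebra.map f x = a := by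
  classical
  obtain ⟨y, rfl⟩ := haV
  refine ⟨(DirectSum.decompose (evenOdd Q₁) y k : CliffordAlgebra Q₁),
    Submodule.coe_mem _, ?_⟩
  have hy : ∑ i : ZMod 2, ((DirectSum.decompose (evenOdd Q₁) y i : evenOdd Q₁ i)
      : CliffordAlgebra Q₁) = y := by
    conv_rhs => rw [← DirectSum.sum_support_decompose (evenOdd Q₁) y]
    exact (Finset.sum_subset (Finset.subset_univ _) (fun i _ hi => by
      rw [DFinsupp.notMem_support_iff.mp hi, Submodule.coe_zero])).symm
  have key : CliffordAlgebra.map f y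
      = ∑ i : ZMod 2, CliffordAlgebra.map f
        ((DirectSum.decompose (evenOdd Q₁) y i : evenOdd Q₁ i) : CliffordAlgebra Q₁) := by
    rw [← map_sum, hy]
  have h2 : (DirectSum.decompose (evenOdd Q₂) (CliffordAlgebra.map f y) k
      : CliffordAlgebra Q₂) = CliffordAlgebra.map f y :=
    DirectSum.decompose_of_mem_same _ ha
  rw [key, DirectSum.decompose_sum, DFinsupp.finset_sum_apply, Submodule.coe_sum] at h2
  rw [Finset.sum_eq_single k ?h₀ ?h₁] at h2
  · rw [DirectSum.decompose_of_mem_same _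
      (aux_map_mem_evenOdd f (Submodule.coe_mem _))] at h2
    show CliffordAlgebra.map f _ = CliffordAlgebra.map f y
    rw [h2, key]
  case h₀ =>
    intro i _ hik
    rw [DirectSum.decompose_of_mem_ne _
      (aux_map_mem_evenOdd f (Submodule.coe_mem _)) hik]
  case h₁ => intro h; exact absurd (Finset.mem_univ k) h

/-- Behavior of the reversal `β = reverse` on products from an orthogonal pair of submodules:
if `a` lies in the `i`-th graded piece and in the subalgebra generated by `ι(V₁)`, and `b` lies
in the `j`-th graded piece and in the subalgebra generated by `ι(V₂)`, with `V₁ ⟂ V₂`, then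
`β(a·b) = (−1)^{ij}·β(a)·β(b)`. -/
theorem stmt10 (R M : Type*) [CommRing R] [AddCommGroup M] [Module R M]
    (Q : QuadraticForm R M) (V₁ V₂ : Submodule R M)
    (horth : ∀ v₁ ∈ V₁, ∀ v₂ ∈ V₂, QuadraticMap.polar (⇑Q) v₁ v₂ = 0)
    (i j : ZMod 2) (a b : CliffordAlgebra Q)
    (hai : a ∈ CliffordAlgebra.evenOdd Q i)
    (haV : a ∈ Algebra.adjoin R (⇑(CliffordAlgebra.ι Q) '' (V₁ : Set M)))
    (hbj : b ∈ CliffordAlgebra.evenOdd Q j)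
    (hbV : b ∈ Algebra.adjoin R (⇑(CliffordAlgebra.ι Q) '' (V₂ : Set M))) :
    if i = 1 ∧ j = 1 then
      CliffordAlgebra.reverse (a * b)
        = -(CliffordAlgebra.reverse a * CliffordAlgebra.reverse b)
    else
      CliffordAlgebra.reverse (a * b)
        = CliffordAlgebra.reverse a * CliffordAlgebra.reverse b := by
  open CliffordAlgebra in
  set f₁ : Q.comp V₁.subtype →qᵢ Q := ⟨V₁.subtype, fun _ => rfl⟩ with hf₁
  set f₂ : Q.comp V₂.subtype →qᵢ Q := ⟨V₂.subtype, fun _ => rfl⟩ with hf₂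
  have hf : ∀ (x : V₁) (y : V₂), Q.IsOrtho (f₁ x) (f₂ y) := by
    intro x y
    rw [QuadraticMap.isOrtho_def]
    have := horth x.1 x.2 y.1 y.2
    rwa [QuadraticMap.polar, sub_sub, sub_eq_zero] at this
  have hr₁ : Algebra.adjoin R (⇑(CliffordAlgebra.ι Q) '' (V₁ : Set M))
      ≤ (CliffordAlgebra.map f₁).range := by
    rw [Algebra.adjoin_le_iff]
    rintro _ ⟨v, hv, rfl⟩
    exact ⟨CliffordAlgebra.ι _ ⟨v, hv⟩, CliffordAlgebra.map_apply_ι _ _⟩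
  have hr₂ : Algebra.adjoin R (⇑(CliffordAlgebra.ι Q) '' (V₂ : Set M))
      ≤ (CliffordAlgebra.map f₂).range := by
    rw [Algebra.adjoin_le_iff]
    rintro _ ⟨v, hv, rfl⟩
    exact ⟨CliffordAlgebra.ι _ ⟨v, hv⟩, CliffordAlgebra.map_apply_ι _ _⟩
  obtain ⟨a', ha', rfl⟩ := aux_exists_preimage f₁ hai (hr₁ haV)
  obtain ⟨b', hb', rfl⟩ := aux_exists_preimage f₂ hbj (hr₂ hbV)
  have key := CliffordAlgebra.map_mul_map_of_isOrtho_of_mem_evenOdd f₂ f₁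
    (fun x y => (hf y x).symm) b' a' hb' ha'
  -- key : map f₂ b' * map f₁ a' = (-1)^(i*j) • (map f₁ a' * map f₂ b')
  have hrev : CliffordAlgebra.reverse (CliffordAlgebra.map f₁ a')
        * CliffordAlgebra.reverse (CliffordAlgebra.map f₂ b')
      = CliffordAlgebra.reverse ((-1 : ℤˣ) ^ (i * j)
        • (CliffordAlgebra.map f₁ a' * CliffordAlgebra.map f₂ b')) := by
    rw [← key, ← CliffordAlgebra.reverse.map_mul]
  have hi2 : ∀ k : ZMod 2, k = 0 ∨ k = 1 := by decide
  split_ifs with h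
  · obtain ⟨hi, hj⟩ := h
    rw [hi, hj] at hrev
    rw [mul_one, uzpow_one, Units.neg_smul, one_smul, map_neg] at hrev
    rw [hrev, neg_neg]
  · have hij : i * j = 0 := by
      rcases hi2 i with hi | hi <;> rcases hi2 j with hj | hj <;>
        simp_all [hi, hj]
    rw [hij, uzpow_zero, one_smul] at hrev
    exact hrev.symm
end

section
/- Let R be a commutative ring, M an R-module, Q a quadratic form on M, and V₁, V₂ ⊆ M submodules with polar Q(v₁, v₂) = 0 for all v₁ ∈ V₁, v₂ ∈ V₂. Let g, h be invertible elements of the Clifford algebra C(Q) such that g lies in the even graded piece and in the R-subalgebra generated by ι(V₁), h lies in the even graded piece and in the R-subalgebra generated by ι(V₂), and such that for every v₁ ∈ V₁ the element g·ι(v₁)·g⁻¹ lies in ι(V₁) and for every v₂ ∈ V₂ the element h·ι(v₂)·h⁻¹ lies in ι(V₂). Then for all v₁ ∈ V₁ and v₂ ∈ V₂: (g·h)·ι(v₁ + v₂)·(g·h)⁻¹ = g·ι(v₁)·g⁻¹ + h·ι(v₂)·h⁻¹, and in particular this element lies in ι(V₁ + V₂). -/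
open CliffordAlgebra in
lemma ι_mul_adjoin_comm {R M : Type*} [CommRing R] [AddCommGroup M] [Module R M]
    {Q : QuadraticForm R M} {V : Submodule R M} {m : M}
    (horth : ∀ v ∈ V, QuadraticMap.polar (⇑Q) m v = 0)
    {x : CliffordAlgebra Q} (hx : x ∈ Algebra.adjoin R (⇑(ι Q) '' (V : Set M))) :
    ι Q m * x = involute x * ι Q m := by
  induction hx using Algebra.adjoin_induction with
  | mem y hy =>
    obtain ⟨v, hv, rfl⟩ := hy
    rw [involute_ι, ι_mul_ι_comm, horth v hv, map_zero, zero_sub, neg_mul]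
  | algebraMap r => simp [Algebra.commutes]
  | add a b _ _ ha hb => rw [mul_add, ha, hb, map_add, add_mul]
  | mul a b _ _ ha hb => rw [← mul_assoc, ha, mul_assoc, hb, map_mul, ← mul_assoc]

/-- For an orthogonal pair of submodules `V₁ ⟂ V₂`, if `g` (resp. `h`) is an invertible even
element of the Clifford algebra lying in the subalgebra generated by `ι(V₁)` (resp. `ι(V₂)`)
whose conjugation preserves `ι(V₁)` (resp. `ι(V₂)`), then conjugation by `g·h` acts on
`ι(V₁ + V₂)` as the block sum of the two conjugations. -/
theorem stmt11 (R M : Type*) [CommRing R] [AddCommGroup M] [Module R M]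
    (Q : QuadraticForm R M) (V₁ V₂ : Submodule R M)
    (horth : ∀ v₁ ∈ V₁, ∀ v₂ ∈ V₂, QuadraticMap.polar (⇑Q) v₁ v₂ = 0)
    (g h : (CliffordAlgebra Q)ˣ)
    (hg0 : (g : CliffordAlgebra Q) ∈ CliffordAlgebra.evenOdd Q 0)
    (hgV : (g : CliffordAlgebra Q)
      ∈ Algebra.adjoin R (⇑(CliffordAlgebra.ι Q) '' (V₁ : Set M)))
    (hh0 : (h : CliffordAlgebra Q) ∈ CliffordAlgebra.evenOdd Q 0)
    (hhV : (h : CliffordAlgebra Q)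
      ∈ Algebra.adjoin R (⇑(CliffordAlgebra.ι Q) '' (V₂ : Set M)))
    (hgconj : ∀ v₁ ∈ V₁,
      (g : CliffordAlgebra Q) * CliffordAlgebra.ι Q v₁ * ((g⁻¹ : (CliffordAlgebra Q)ˣ) : CliffordAlgebra Q)
        ∈ ⇑(CliffordAlgebra.ι Q) '' (V₁ : Set M))
    (hhconj : ∀ v₂ ∈ V₂,
      (h : CliffordAlgebra Q) * CliffordAlgebra.ι Q v₂ * ((h⁻¹ : (CliffordAlgebra Q)ˣ) : CliffordAlgebra Q)
        ∈ ⇑(CliffordAlgebra.ι Q) '' (V₂ : Set M)) :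
    ∀ v₁ ∈ V₁, ∀ v₂ ∈ V₂,
      ((g * h : (CliffordAlgebra Q)ˣ) : CliffordAlgebra Q) * CliffordAlgebra.ι Q (v₁ + v₂) *
          (((g * h)⁻¹ : (CliffordAlgebra Q)ˣ) : CliffordAlgebra Q)
        = (g : CliffordAlgebra Q) * CliffordAlgebra.ι Q v₁ *
            ((g⁻¹ : (CliffordAlgebra Q)ˣ) : CliffordAlgebra Q)
          + (h : CliffordAlgebra Q) * CliffordAlgebra.ι Q v₂ *
              ((h⁻¹ : (CliffordAlgebra Q)ˣ) : CliffordAlgebra Q) ∧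
      ((g * h : (CliffordAlgebra Q)ˣ) : CliffordAlgebra Q) * CliffordAlgebra.ι Q (v₁ + v₂) *
          (((g * h)⁻¹ : (CliffordAlgebra Q)ˣ) : CliffordAlgebra Q)
        ∈ ⇑(CliffordAlgebra.ι Q) '' ((V₁ ⊔ V₂ : Submodule R M) : Set M) := by
  intro v₁ hv₁ v₂ hv₂
  -- h commutes with ι v₁
  have hcomm : CliffordAlgebra.ι Q v₁ * (h : CliffordAlgebra Q)
      = (h : CliffordAlgebra Q) * CliffordAlgebra.ι Q v₁ := by
    rw [ι_mul_adjoin_comm (fun v hv => horth v₁ hv₁ v hv) hhV,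
      CliffordAlgebra.involute_eq_of_mem_even hh0]
  -- h ι v₂ h⁻¹ = ι w, w ∈ V₂
  obtain ⟨w, hw, hweq⟩ := hhconj v₂ hv₂
  have gcomm : CliffordAlgebra.ι Q w * (g : CliffordAlgebra Q)
      = (g : CliffordAlgebra Q) * CliffordAlgebra.ι Q w := by
    rw [ι_mul_adjoin_comm (fun v hv => by
        rw [QuadraticMap.polar_comm]; exact horth v hv w hw) hgV,
      CliffordAlgebra.involute_eq_of_mem_even hg0]
  obtain ⟨u, hu, hueq⟩ := hgconj v₁ hv₁
  have key : ((g * h : (CliffordAlgebra Q)ˣ) : CliffordAlgebra Q) * CliffordAlgebra.ι Q (v₁ + v₂) *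
          (((g * h)⁻¹ : (CliffordAlgebra Q)ˣ) : CliffordAlgebra Q)
        = (g : CliffordAlgebra Q) * CliffordAlgebra.ι Q v₁ *
            ((g⁻¹ : (CliffordAlgebra Q)ˣ) : CliffordAlgebra Q)
          + (h : CliffordAlgebra Q) * CliffordAlgebra.ι Q v₂ *
              ((h⁻¹ : (CliffordAlgebra Q)ˣ) : CliffordAlgebra Q) := by
    rw [map_add, mul_inv_rev, Units.val_mul, Units.val_mul, mul_add, add_mul]
    congr 1
    · -- g h ι v₁ h⁻¹ g⁻¹ = g ι v₁ g⁻¹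
      have : (h : CliffordAlgebra Q) * CliffordAlgebra.ι Q v₁ *
          ((h⁻¹ : (CliffordAlgebra Q)ˣ) : CliffordAlgebra Q) = CliffordAlgebra.ι Q v₁ := by
        rw [← hcomm, mul_assoc, Units.mul_inv, mul_one]
      calc (g : CliffordAlgebra Q) * (h : CliffordAlgebra Q) * CliffordAlgebra.ι Q v₁ *
            (((h⁻¹ : (CliffordAlgebra Q)ˣ) : CliffordAlgebra Q) *
              ((g⁻¹ : (CliffordAlgebra Q)ˣ) : CliffordAlgebra Q))
          = (g : CliffordAlgebra Q) * ((h : CliffordAlgebra Q) * CliffordAlgebra.ι Q v₁ *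
              ((h⁻¹ : (CliffordAlgebra Q)ˣ) : CliffordAlgebra Q)) *
              ((g⁻¹ : (CliffordAlgebra Q)ˣ) : CliffordAlgebra Q) := by
            simp only [mul_assoc]
        _ = _ := by rw [this]
    · -- g h ι v₂ h⁻¹ g⁻¹ = h ι v₂ h⁻¹
      calc (g : CliffordAlgebra Q) * (h : CliffordAlgebra Q) * CliffordAlgebra.ι Q v₂ *
            (((h⁻¹ : (CliffordAlgebra Q)ˣ) : CliffordAlgebra Q) *
              ((g⁻¹ : (CliffordAlgebra Q)ˣ) : CliffordAlgebra Q))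
          = (g : CliffordAlgebra Q) * ((h : CliffordAlgebra Q) * CliffordAlgebra.ι Q v₂ *
              ((h⁻¹ : (CliffordAlgebra Q)ˣ) : CliffordAlgebra Q)) *
              ((g⁻¹ : (CliffordAlgebra Q)ˣ) : CliffordAlgebra Q) := by
            simp only [mul_assoc]
        _ = (g : CliffordAlgebra Q) * CliffordAlgebra.ι Q w *
              ((g⁻¹ : (CliffordAlgebra Q)ˣ) : CliffordAlgebra Q) := by rw [← hweq]
        _ = CliffordAlgebra.ι Q w := by rw [← gcomm, mul_assoc, Units.mul_inv, mul_one]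
        _ = _ := hweq
  refine ⟨key, ?_⟩
  rw [key, ← hueq, ← hweq, ← map_add]
  exact ⟨u + w, Submodule.mem_sup.2 ⟨u, hu, w, hw, rfl⟩, rfl⟩
end

section
/- Let Γ be a group, N a subgroup of Γ, and c ∈ Γ with c² = 1, c ∉ N, and Γ = N ∪ Nc. Let H be a group with an automorphism θ satisfying θ∘θ = id, and let ρ' : N → H be a group homomorphism. Assume: (H1) every element of H that commutes with ρ'(γ) for all γ ∈ N lies in the center Z(H) of H; and (H2) for every z ∈ Z(H) with θ(z) = z there exists w ∈ Z(H) with z = w·θ(w). Suppose there exists h ∈ H with ρ'(c·γ·c) = h·θ(ρ'(γ))·h⁻¹ for all γ ∈ N. Then there exists g ∈ H with g·θ(g) = 1 and ρ'(c·γ·c) = g·θ(ρ'(γ))·g⁻¹ for all γ ∈ N. -/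
/-- Under hypotheses (H1) (the centralizer of the image of `ρ'` is the center of `H`) and
(H2) (every θ-fixed central element is of the form `w·θ(w)` with `w` central), if the
`c`-conjugate of `ρ'` is `H`-conjugate to `θ∘ρ'`, then the conjugating element can be chosen
to be a `g` with `g·θ(g) = 1`. -/
theorem stmt15 {Γ H : Type*} [Group Γ] [Group H]
    (N : Subgroup Γ) (c : Γ) (hc2 : c * c = 1) (hcN : c ∉ N)
    (hcover : ∀ γ : Γ, γ ∈ N ∨ ∃ ν ∈ N, γ = ν * c)
    (θ : MulAut H) (hθ : ∀ h, θ (θ h) = h)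
    (ρ' : N →* H)
    (H1 : ∀ x : H,
      (∀ γ (hγ : γ ∈ N), x * ρ' ⟨γ, hγ⟩ = ρ' ⟨γ, hγ⟩ * x) → x ∈ Subgroup.center H)
    (H2 : ∀ z ∈ Subgroup.center H, θ z = z → ∃ w ∈ Subgroup.center H, z = w * θ w)
    (h : H)
    (hh : ∀ γ (hγ : γ ∈ N) (hγ' : c * γ * c ∈ N),
      ρ' ⟨c * γ * c, hγ'⟩ = h * θ (ρ' ⟨γ, hγ⟩) * h⁻¹) :
    ∃ g : H, g * θ g = 1 ∧
      ∀ γ (hγ : γ ∈ N) (hγ' : c * γ * c ∈ N),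
        ρ' ⟨c * γ * c, hγ'⟩ = g * θ (ρ' ⟨γ, hγ⟩) * g⁻¹ := by
  -- c-conjugation preserves N
  have hmem : ∀ γ ∈ N, c * γ * c ∈ N := by
    intro γ hγ
    rcases hcover (c * γ * c) with hm | ⟨ν, hν, he⟩
    · exact hm
    · exfalso
      have h1 : c * γ = ν := by
        have := congrArg (· * c) he
        rw [mul_assoc, hc2, mul_one, mul_assoc, hc2, mul_one] at this
        exact this
      have : c = ν * γ⁻¹ := by rw [← h1]; group
      exact hcN (this ▸ N.mul_mem hν (N.inv_mem hγ))
  have hback : ∀ γ : Γ, c * (c * γ * c) * c = γ := by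
    intro γ
    calc c * (c * γ * c) * c = (c * c) * γ * (c * c) := by group
    _ = γ := by rw [hc2]; group
  -- z = h * θ h commutes with the image of ρ'
  set z := h * θ h with hz
  have hzcomm : ∀ γ (hγ : γ ∈ N), z * ρ' ⟨γ, hγ⟩ = ρ' ⟨γ, hγ⟩ * z := by
    intro γ hγ
    have hγ' := hmem γ hγ
    have hγ'' : c * (c * γ * c) * c ∈ N := by rw [hback γ]; exact hγ
    have e1 := hh γ hγ hγ'
    have e2 := hh (c * γ * c) hγ' hγ''
    have e3 : (⟨c * (c * γ * c) * c, hγ''⟩ : N) = ⟨γ, hγ⟩ := Subtype.ext (hback γ)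
    rw [e3, e1] at e2
    -- e2 : ρ' γ = h * θ (h * θ (ρ' γ) * h⁻¹) * h⁻¹
    have e4 : ρ' ⟨γ, hγ⟩ = h * (θ h * ρ' ⟨γ, hγ⟩ * (θ h)⁻¹) * h⁻¹ := by
      rw [map_mul, map_mul, map_inv, hθ] at e2; exact e2
    have : z * ρ' ⟨γ, hγ⟩ * z⁻¹ = ρ' ⟨γ, hγ⟩ := by
      rw [hz]
      conv_rhs => rw [e4]
      group
    calc z * ρ' ⟨γ, hγ⟩ = (z * ρ' ⟨γ, hγ⟩ * z⁻¹) * z := by group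
    _ = ρ' ⟨γ, hγ⟩ * z := by rw [this]
  have hzc : z ∈ Subgroup.center H := H1 z hzcomm
  have hcomm : θ h * h = h * θ h := by
    have hc' : θ h * z = z * θ h := Subgroup.mem_center_iff.mp hzc (θ h)
    rw [hz] at hc'
    have h2 : (θ h * h) * θ h = (h * θ h) * θ h := by rw [mul_assoc]; exact hc'
    exact mul_right_cancel h2
  have hzfix : θ z = z := by
    rw [hz]; simp only [map_mul, hθ]; rw [hcomm]
  obtain ⟨w, hw, hzw⟩ := H2 z hzc hzfix
  have hwθ : θ w ∈ Subgroup.center H := by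
    rw [Subgroup.mem_center_iff]
    intro g
    have : θ (θ g * w) = θ (w * θ g) := by
      rw [Subgroup.mem_center_iff.mp hw (θ g)]
    simpa [map_mul, hθ] using this
  refine ⟨w⁻¹ * h, ?_, ?_⟩
  · have hcw : (θ w)⁻¹ * h = h * (θ w)⁻¹ :=
      (Subgroup.mem_center_iff.mp (Subgroup.inv_mem _ hwθ) h).symm
    calc w⁻¹ * h * θ (w⁻¹ * h) = w⁻¹ * (h * (θ w)⁻¹) * θ h := by
          simp [map_mul, mul_assoc]
    _ = w⁻¹ * ((θ w)⁻¹ * h) * θ h := by rw [hcw]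
    _ = w⁻¹ * (θ w)⁻¹ * (h * θ h) := by group
    _ = (θ w)⁻¹ * w⁻¹ * (h * θ h) := by
          rw [Subgroup.mem_center_iff.mp (Subgroup.inv_mem _ hw) (θ w)⁻¹]
    _ = (w * θ w)⁻¹ * (h * θ h) := by rw [mul_inv_rev]
    _ = 1 := by rw [← hzw, ← hz]; group
  · intro γ hγ hγ'
    have hcw2 : ∀ x : H, w⁻¹ * x * w = x := by
      intro x
      have := Subgroup.mem_center_iff.mp hw x
      calc w⁻¹ * x * w = w⁻¹ * (x * w) := by group
      _ = w⁻¹ * (w * x) := by rw [← this]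
      _ = x := by group
    have e1 := hh γ hγ hγ'
    rw [e1]
    have : w⁻¹ * h * θ (ρ' ⟨γ, hγ⟩) * (w⁻¹ * h)⁻¹
        = w⁻¹ * (h * θ (ρ' ⟨γ, hγ⟩) * h⁻¹) * w := by group
    rw [this, hcw2]
end

section
/- Let Γ be a group, N a subgroup of Γ, and c ∈ Γ with c² = 1, c ∉ N, and Γ = N ∪ Nc. Let H be a group with an automorphism θ satisfying θ∘θ = id, form H ⋊ ℤ/2 with the nontrivial element acting by θ, and let ρ' : N → H be a homomorphism satisfying (H1): every element of H commuting with ρ'(γ) for all γ ∈ N lies in the center Z(H). Let ρ₀, ρ₁ : Γ → H ⋊ ℤ/2 be two homomorphisms with ρₑ(γ) = (ρ'(γ), 0) for all γ ∈ N and ρₑ(c) ∈ H × {1} (e = 0, 1), and write ρ₀(c) = (g₀, 1), ρ₁(c) = (g₁, 1). Then: z := g₀·g₁⁻¹ lies in Z(H) and satisfies z·θ(z) = 1; and there exists h ∈ H with ρ₁(γ) = (h, 0)·ρ₀(γ)·(h, 0)⁻¹ for all γ ∈ Γ if and only if there exists x ∈ Z(H) with z = θ(x)·x⁻¹. -/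
/-- The action of `ℤ/2` on `H` through an involutive automorphism `θ`, as a homomorphism
`Multiplicative (ZMod 2) →* MulAut H` (used to form the semidirect product `H ⋊ ℤ/2`). -/
def thetaAction {H : Type*} [Group H] (θ : MulAut H) (hθ : ∀ h, θ (θ h) = h) :
    Multiplicative (ZMod 2) →* MulAut H :=
  MonoidHom.mk' (fun x => θ ^ (Multiplicative.toAdd x).val) (by
    have h2 : θ * θ = 1 := by
      ext h
      simpa using hθ h
    have key : ∀ m : ℕ, θ ^ (m % 2) = θ ^ m := by
      intro m
      conv_rhs => rw [← Nat.div_add_mod m 2]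
      rw [pow_add, pow_mul, sq, h2, one_pow, one_mul]
    intro a b
    simp only [toAdd_mul, ZMod.val_add, key, pow_add])

/-- For two extensions `ρ₀, ρ₁ : Γ → H ⋊ ℤ/2` of `ρ' : N → H` with `ρ₀(c) = (g₀, 1)` and
`ρ₁(c) = (g₁, 1)`, under hypothesis (H1) the element `z := g₀·g₁⁻¹` is central and satisfies
`z·θ(z) = 1`; and `ρ₁` is conjugate to `ρ₀` by an element `(h, 0)` of `H` iff `z = θ(x)·x⁻¹`
for some central `x` (so the extensions form a torsor under `H¹(ℤ/2, Z(H))`). -/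
theorem stmt16 {Γ H : Type*} [Group Γ] [Group H]
    (N : Subgroup Γ) (c : Γ) (hc2 : c * c = 1) (hcN : c ∉ N)
    (hcover : ∀ γ : Γ, γ ∈ N ∨ ∃ ν ∈ N, γ = ν * c)
    (θ : MulAut H) (hθ : ∀ h, θ (θ h) = h)
    (ρ' : N →* H)
    (H1 : ∀ x : H,
      (∀ γ (hγ : γ ∈ N), x * ρ' ⟨γ, hγ⟩ = ρ' ⟨γ, hγ⟩ * x) → x ∈ Subgroup.center H)
    (ρ₀ ρ₁ : Γ →* H ⋊[thetaAction θ hθ] Multiplicative (ZMod 2))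
    (hρ₀ : ∀ γ (hγ : γ ∈ N), ρ₀ γ = ⟨ρ' ⟨γ, hγ⟩, 1⟩)
    (hρ₁ : ∀ γ (hγ : γ ∈ N), ρ₁ γ = ⟨ρ' ⟨γ, hγ⟩, 1⟩)
    (g₀ g₁ : H)
    (hg₀ : ρ₀ c = ⟨g₀, Multiplicative.ofAdd (1 : ZMod 2)⟩)
    (hg₁ : ρ₁ c = ⟨g₁, Multiplicative.ofAdd (1 : ZMod 2)⟩) :
    (g₀ * g₁⁻¹ ∈ Subgroup.center H ∧ (g₀ * g₁⁻¹) * θ (g₀ * g₁⁻¹) = 1) ∧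
    ((∃ h : H, ∀ γ : Γ,
        ρ₁ γ = SemidirectProduct.inl h * ρ₀ γ * (SemidirectProduct.inl h)⁻¹) ↔
      ∃ x ∈ Subgroup.center H, g₀ * g₁⁻¹ = θ x * x⁻¹) := by
  have hφ1 : ∀ a : H, (thetaAction θ hθ) (Multiplicative.ofAdd (1 : ZMod 2)) a = θ a := by
    intro a
    show (θ ^ ((1 : ZMod 2)).val) a = θ a
    norm_num [ZMod.val_one]
  have hφ0 : ∀ a : H, (thetaAction θ hθ) (1 : Multiplicative (ZMod 2)) a = a := by
    intro a
    rw [map_one]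
    rfl
  have hεε : (Multiplicative.ofAdd (1 : ZMod 2)) * (Multiplicative.ofAdd (1 : ZMod 2))
      = 1 := by decide
  -- squares
  have hsq : ∀ (ρ : Γ →* H ⋊[thetaAction θ hθ] Multiplicative (ZMod 2)) (g : H),
      ρ c = ⟨g, Multiplicative.ofAdd (1 : ZMod 2)⟩ → g * θ g = 1 := by
    intro ρ g hg
    have h1 : ρ (c * c) = ρ c * ρ c := map_mul ρ c c
    rw [hc2, map_one, hg] at h1
    simp only [SemidirectProduct.mul_def, hφ1, hεε] at h1
    have h2 := congrArg SemidirectProduct.left h1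
    simpa using h2.symm
  have hθg₀ : θ g₀ = g₀⁻¹ := (inv_eq_of_mul_eq_one_right (hsq ρ₀ g₀ hg₀)).symm
  have hθg₁ : θ g₁ = g₁⁻¹ := (inv_eq_of_mul_eq_one_right (hsq ρ₁ g₁ hg₁)).symm
  -- c ν c ∈ N
  have hconj : ∀ ν ∈ N, c * ν * c ∈ N := by
    intro ν hν
    rcases hcover (c * ν * c) with h | ⟨μ, hμ, heq⟩
    · exact h
    · exfalso
      have hcν : c * ν = μ := mul_right_cancel heq
      apply hcN
      have : c = μ * ν⁻¹ := by rw [← hcν]; group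
      rw [this]; exact N.mul_mem hμ (N.inv_mem hν)
  -- the key relation
  have hrel : ∀ (ρ : Γ →* H ⋊[thetaAction θ hθ] Multiplicative (ZMod 2)) (g : H),
      (∀ γ (hγ : γ ∈ N), ρ γ = ⟨ρ' ⟨γ, hγ⟩, 1⟩) →
      ρ c = ⟨g, Multiplicative.ofAdd (1 : ZMod 2)⟩ →
      ∀ ν (hν : ν ∈ N),
        ρ' ⟨c * ν * c, hconj ν hν⟩ = g * θ (ρ' ⟨ν, hν⟩) * θ g := by
    intro ρ g hρ hg ν hν
    have h1 : ρ (c * ν * c) = ρ c * ρ ν * ρ c := by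
      rw [← map_mul, ← map_mul]
    rw [hρ (c * ν * c) (hconj ν hν), hg, hρ ν hν] at h1
    simp only [SemidirectProduct.mul_def, hφ1, hφ0, hεε, mul_one, one_mul] at h1
    have h2 := congrArg SemidirectProduct.left h1
    simpa using h2
  have hrel₀ : ∀ ν (hν : ν ∈ N),
      ρ' ⟨c * ν * c, hconj ν hν⟩ = g₀ * θ (ρ' ⟨ν, hν⟩) * g₀⁻¹ := by
    intro ν hν
    rw [hrel ρ₀ g₀ hρ₀ hg₀ ν hν, hθg₀]
  have hrel₁ : ∀ ν (hν : ν ∈ N),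
      ρ' ⟨c * ν * c, hconj ν hν⟩ = g₁ * θ (ρ' ⟨ν, hν⟩) * g₁⁻¹ := by
    intro ν hν
    rw [hrel ρ₁ g₁ hρ₁ hg₁ ν hν, hθg₁]
  -- z is central
  have hzc : g₀ * g₁⁻¹ ∈ Subgroup.center H := by
    apply H1
    intro μ hμ
    have hν : c * μ * c ∈ N := hconj μ hμ
    have hback : c * (c * μ * c) * c = μ := by
      have h1 : c * (c * μ * c) * c = (c * c) * μ * (c * c) := by group
      rw [h1, hc2]; group
    have heq : (⟨c * (c * μ * c) * c, hconj _ hν⟩ : N) = ⟨μ, hμ⟩ :=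
      Subtype.ext hback
    have hA : ρ' ⟨μ, hμ⟩ = g₀ * θ (ρ' ⟨c * μ * c, hν⟩) * g₀⁻¹ := by
      rw [← heq]; exact hrel₀ _ hν
    have hB : ρ' ⟨μ, hμ⟩ = g₁ * θ (ρ' ⟨c * μ * c, hν⟩) * g₁⁻¹ := by
      rw [← heq]; exact hrel₁ _ hν
    calc g₀ * g₁⁻¹ * ρ' ⟨μ, hμ⟩
        = g₀ * g₁⁻¹ * (g₁ * θ (ρ' ⟨c * μ * c, hν⟩) * g₁⁻¹) := by rw [← hB]
      _ = (g₀ * θ (ρ' ⟨c * μ * c, hν⟩) * g₀⁻¹) * (g₀ * g₁⁻¹) := by group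
      _ = ρ' ⟨μ, hμ⟩ * (g₀ * g₁⁻¹) := by rw [← hA]
  have hcomm := Subgroup.mem_center_iff.mp hzc
  have hθz : θ (g₀ * g₁⁻¹) = g₀⁻¹ * g₁ := by
    rw [map_mul, map_inv, hθg₀, hθg₁]
    group
  have hzθz : (g₀ * g₁⁻¹) * θ (g₀ * g₁⁻¹) = 1 := by
    rw [hθz]
    have h1 : (g₀ * g₁⁻¹) * (g₀⁻¹ * g₁) = ((g₀ * g₁⁻¹) * g₀⁻¹) * g₁ := by group
    rw [h1, ← hcomm g₀⁻¹]
    group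
  -- θ maps center to center
  have hθcen : ∀ x : H, x ∈ Subgroup.center H → θ x ∈ Subgroup.center H := by
    intro x hx
    rw [Subgroup.mem_center_iff] at hx ⊢
    intro a
    simpa [map_mul, hθ] using congrArg θ (hx (θ a))
  have hinl : ∀ h : H,
      (SemidirectProduct.inl h : H ⋊[thetaAction θ hθ] Multiplicative (ZMod 2))
      = ⟨h, 1⟩ := fun _ => rfl
  refine ⟨⟨hzc, hzθz⟩, ?_, ?_⟩
  · rintro ⟨h, hh⟩
    have hhc : h ∈ Subgroup.center H := by
      apply H1
      intro μ hμ
      have e := hh μ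
      rw [hρ₀ μ hμ, hρ₁ μ hμ, ← map_inv, hinl, hinl] at e
      simp only [SemidirectProduct.mul_def, hφ0, mul_one, one_mul] at e
      have e1 : ρ' ⟨μ, hμ⟩ = h * ρ' ⟨μ, hμ⟩ * h⁻¹ := by
        simpa using congrArg SemidirectProduct.left e
      have e2 := congrArg (· * h) e1
      simp only [inv_mul_cancel_right] at e2
      exact e2.symm
    refine ⟨h, hhc, ?_⟩
    have e := hh c
    rw [hg₀, hg₁, ← map_inv, hinl, hinl] at e
    simp only [SemidirectProduct.mul_def, hφ0, hφ1, mul_one, one_mul] at e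
    have e1 : g₁ = h * g₀ * θ h⁻¹ := by
      simpa using congrArg SemidirectProduct.left e
    rw [map_inv] at e1
    have cθh := Subgroup.mem_center_iff.mp (hθcen h hhc)
    have h2 : g₀ * g₁⁻¹ = g₀ * θ h * g₀⁻¹ * h⁻¹ := by rw [e1]; group
    rw [h2, cθh g₀]
    group
  · rintro ⟨x, hx, hzx⟩
    have cx := Subgroup.mem_center_iff.mp hx
    have cθx := Subgroup.mem_center_iff.mp (hθcen x hx)
    refine ⟨x, fun γ => ?_⟩
    have hg₁eq : g₁ = x * g₀ * (θ x)⁻¹ := by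
      have h1 : g₁ = x * (θ x)⁻¹ * g₀ := by
        have h2 := congrArg (fun t => x * (θ x)⁻¹ * t * g₁) hzx
        simpa [mul_assoc] using h2.symm
      have h3 : (θ x)⁻¹ * g₀ = g₀ * (θ x)⁻¹ := by
        calc (θ x)⁻¹ * g₀ = (θ x)⁻¹ * (g₀ * θ x) * (θ x)⁻¹ := by group
          _ = (θ x)⁻¹ * (θ x * g₀) * (θ x)⁻¹ := by rw [cθx g₀]
          _ = g₀ * (θ x)⁻¹ := by group
      rw [h1, mul_assoc, h3, ← mul_assoc]
    rcases hcover γ with hγ | ⟨ν, hν, rfl⟩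
    · rw [hρ₀ γ hγ, hρ₁ γ hγ, ← map_inv, hinl, hinl]
      simp only [SemidirectProduct.mul_def, hφ0, mul_one, one_mul]
      rw [← cx (ρ' ⟨γ, hγ⟩), mul_inv_cancel_right]
    · have h0 : ρ₀ (ν * c) = ⟨ρ' ⟨ν, hν⟩ * g₀, Multiplicative.ofAdd (1 : ZMod 2)⟩ := by
        rw [map_mul, hρ₀ ν hν, hg₀]
        simp only [SemidirectProduct.mul_def, hφ0, one_mul]
      have h1 : ρ₁ (ν * c) = ⟨ρ' ⟨ν, hν⟩ * g₁, Multiplicative.ofAdd (1 : ZMod 2)⟩ := by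
        rw [map_mul, hρ₁ ν hν, hg₁]
        simp only [SemidirectProduct.mul_def, hφ0, one_mul]
      rw [h0, h1, ← map_inv, hinl, hinl]
      simp only [SemidirectProduct.mul_def, hφ0, hφ1, mul_one, one_mul]
      congr 1
      rw [hg₁eq, map_inv, ← cx (ρ' ⟨ν, hν⟩ * g₀), ← cx g₀]
      group
end
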